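/- arXiv:2304.09757 — 2 statements merged into one kernel-verified Lean document; each statement's English description precedes it below -/
import Mathlib

section
/- Let 1 ≤ q < ∞ and let u : ℝ^N → ℝ^d be a function for which there exist constants 0 < A_1, A_2 < ∞ with A_1·|x−y|^{1/q} ≤ |u(x)−u(y)| ≤ A_2·|x−y|^{1/q} for all x, y ∈ ℝ^N. Then for every open, bounded, nonempty set Ω ⊂ ℝ^N one has 0 < α(N)·A_1^q·L^N(Ω) ≤ B̲_{u,q}(Ω) ≤ B̄_{u,q}(Ω) ≤ α(N)·A_2^q·L^N(Ω) < ∞. In particular u ∈ BV^q(Ω,ℝ^d), and since u is continuous (so J'_u = ∅), the q-jump inequality C_N ∫_{J'_u} |u^{j'}|^q dH^{N-1} ≤ B̲_{u,q}(Ω) is strict for u. -/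
open MeasureTheory Metric Filter Set Topology
open scoped ENNReal NNReal

noncomputable section

/-- `ℝ^N` as a Euclidean space. -/
abbrev Euc (N : ℕ) : Type := EuclideanSpace ℝ (Fin N)

/-- The average `⨍_s f` of an `ℝ≥0∞`-valued function over a set `s`,
with respect to the Lebesgue measure. -/
def eavg {N : ℕ} (s : Set (Euc N)) (f : Euc N → ℝ≥0∞) : ℝ≥0∞ :=
  (∫⁻ y in s, f y) / volume s

/-- The double integral `∫_Ω ( ∫_{Ω ∩ B_ε(x)} (1/ε^N) |u(x)−u(y)|^q / |x−y| dy ) dx`. -/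
def besovInt (N d : ℕ) (Ω : Set (Euc N)) (u : Euc N → Euc d) (q ε : ℝ) : ℝ≥0∞ :=
  ∫⁻ x in Ω, ∫⁻ y in Ω ∩ ball x ε,
    (‖u x - u y‖₊ : ℝ≥0∞) ^ q / (ENNReal.ofReal (ε ^ N) * (‖x - y‖₊ : ℝ≥0∞))

/-- The half ball `B_ρ^+(x,ν) = {y ∈ B_ρ(x) : (y−x)·ν > 0}`. -/
def halfBallP {N : ℕ} (x ν : Euc N) (ρ : ℝ) : Set (Euc N) :=
  {y | y ∈ ball x ρ ∧ 0 < (inner ℝ ν (y - x) : ℝ)}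

/-- The half ball `B_ρ^-(x,ν) = {y ∈ B_ρ(x) : (y−x)·ν < 0}`. -/
def halfBallM {N : ℕ} (x ν : Euc N) (ρ : ℝ) : Set (Euc N) :=
  {y | y ∈ ball x ρ ∧ (inner ℝ ν (y - x) : ℝ) < 0}

/-- `x` is a generalized approximate jump point of `u` with data `(h, ν)`. -/
def IsGenJump {N d : ℕ} (u : Euc N → Euc d) (x : Euc N) (h : Euc d) (ν : Euc N) : Prop :=
  ‖ν‖ = 1 ∧ h ≠ 0 ∧
    Tendsto (fun ρ => ⨅ c : Euc d,
        ((eavg (halfBallP x ν ρ) fun y => (‖u y - h - c‖₊ : ℝ≥0∞)) +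
          eavg (halfBallM x ν ρ) fun y => (‖u y - c‖₊ : ℝ≥0∞)))
      (𝓝[>] (0:ℝ)) (𝓝 0)

/-- The generalized jump set `J'_u` of `u` in `Ω`. -/
def genJumpSet {N d : ℕ} (Ω : Set (Euc N)) (u : Euc N → Euc d) : Set (Euc N) :=
  {x ∈ Ω | ∃ h ν, IsGenJump u x h ν}

section AuxLemmas

variable {N d : ℕ}

lemma isOpen_halfBallP (x ν : Euc N) (ρ : ℝ) : IsOpen (halfBallP x ν ρ) := by
  have h : halfBallP x ν ρ = ball x ρ ∩ {y | (0:ℝ) < (inner ℝ ν (y - x) : ℝ)} := rfl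
  rw [h]
  exact isOpen_ball.inter (isOpen_lt continuous_const
    (Continuous.inner continuous_const (continuous_id.sub continuous_const)))

lemma isOpen_halfBallM (x ν : Euc N) (ρ : ℝ) : IsOpen (halfBallM x ν ρ) := by
  have h : halfBallM x ν ρ = ball x ρ ∩ {y | (inner ℝ ν (y - x) : ℝ) < 0} := rfl
  rw [h]
  exact isOpen_ball.inter (isOpen_lt
    (Continuous.inner continuous_const (continuous_id.sub continuous_const)) continuous_const)

lemma halfBallP_nonempty {x ν : Euc N} (hν : ‖ν‖ = 1) {ρ : ℝ} (hρ : 0 < ρ) :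
    (halfBallP x ν ρ).Nonempty := by
  refine ⟨x + (ρ/2) • ν, ?_, ?_⟩
  · rw [mem_ball, dist_eq_norm, add_sub_cancel_left, norm_smul, hν, mul_one,
      Real.norm_eq_abs, abs_of_pos (by linarith)]
    linarith
  · rw [add_sub_cancel_left, real_inner_smul_right, real_inner_self_eq_norm_sq, hν]
    nlinarith

lemma halfBallM_nonempty {x ν : Euc N} (hν : ‖ν‖ = 1) {ρ : ℝ} (hρ : 0 < ρ) :
    (halfBallM x ν ρ).Nonempty := by
  refine ⟨x + (-(ρ/2)) • ν, ?_, ?_⟩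
  · rw [mem_ball, dist_eq_norm, add_sub_cancel_left, norm_smul, hν, mul_one,
      Real.norm_eq_abs, abs_of_neg (by linarith)]
    linarith
  · rw [add_sub_cancel_left, real_inner_smul_right, real_inner_self_eq_norm_sq, hν]
    nlinarith

lemma volume_halfBallP_ne_zero {x ν : Euc N} (hν : ‖ν‖ = 1) {ρ : ℝ} (hρ : 0 < ρ) :
    volume (halfBallP x ν ρ) ≠ 0 :=
  ((isOpen_halfBallP x ν ρ).measure_pos volume (halfBallP_nonempty hν hρ)).ne'

lemma volume_halfBallM_ne_zero {x ν : Euc N} (hν : ‖ν‖ = 1) {ρ : ℝ} (hρ : 0 < ρ) :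
    volume (halfBallM x ν ρ) ≠ 0 :=
  ((isOpen_halfBallM x ν ρ).measure_pos volume (halfBallM_nonempty hν hρ)).ne'

lemma volume_halfBallP_ne_top (x ν : Euc N) (ρ : ℝ) :
    volume (halfBallP x ν ρ) ≠ ⊤ :=
  ((measure_mono (fun _ hy => hy.1)).trans_lt measure_ball_lt_top).ne

lemma volume_halfBallM_ne_top (x ν : Euc N) (ρ : ℝ) :
    volume (halfBallM x ν ρ) ≠ ⊤ :=
  ((measure_mono (fun _ hy => hy.1)).trans_lt measure_ball_lt_top).ne

lemma le_eavg {s : Set (Euc N)} (hs : MeasurableSet s) (h0 : volume s ≠ 0)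
    (ht : volume s ≠ ⊤) {f : Euc N → ℝ≥0∞} {c : ℝ≥0∞} (h : ∀ y ∈ s, c ≤ f y) :
    c ≤ eavg s f := by
  have h1 : c * volume s ≤ ∫⁻ y in s, f y := by
    rw [← setLIntegral_const]
    exact lintegral_mono_ae ((ae_restrict_iff' hs).mpr (ae_of_all _ h))
  have h2 : c = c * volume s / volume s := by
    rw [mul_div_assoc, ENNReal.div_self h0 ht, mul_one]
  rw [h2, eavg]
  exact ENNReal.div_le_div_right h1 _

lemma key_pow {q A t : ℝ} (hq : 1 ≤ q) (hA : 0 ≤ A) (ht : 0 ≤ t) :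
    (A * t ^ (1/q)) ^ q = A ^ q * t := by
  have hq0 : q ≠ 0 := (lt_of_lt_of_le one_pos hq).ne'
  rw [Real.mul_rpow hA (Real.rpow_nonneg ht _), ← Real.rpow_mul ht,
    one_div_mul_cancel hq0, Real.rpow_one]

lemma besov_nnnorm_pow_le {q : ℝ} (hq : 1 ≤ q) {A : ℝ} (hA : 0 ≤ A) {v : Euc d} {w : Euc N}
    (h : ‖v‖ ≤ A * ‖w‖ ^ (1/q)) :
    (‖v‖₊ : ℝ≥0∞) ^ q ≤ ENNReal.ofReal (A ^ q) * (‖w‖₊ : ℝ≥0∞) := by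
  have hq0 : (0:ℝ) ≤ q := by linarith
  rw [← enorm_eq_nnnorm, ← ofReal_norm, ← enorm_eq_nnnorm, ← ofReal_norm,
    ENNReal.ofReal_rpow_of_nonneg (norm_nonneg _) hq0,
    ← ENNReal.ofReal_mul (by positivity)]
  refine ENNReal.ofReal_le_ofReal ?_
  calc ‖v‖ ^ q ≤ (A * ‖w‖ ^ (1/q)) ^ q := Real.rpow_le_rpow (norm_nonneg _) h hq0
  _ = A ^ q * ‖w‖ := key_pow hq hA (norm_nonneg _)

lemma besov_nnnorm_pow_ge {q : ℝ} (hq : 1 ≤ q) {A : ℝ} (hA : 0 ≤ A) {v : Euc d} {w : Euc N}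
    (h : A * ‖w‖ ^ (1/q) ≤ ‖v‖) :
    ENNReal.ofReal (A ^ q) * (‖w‖₊ : ℝ≥0∞) ≤ (‖v‖₊ : ℝ≥0∞) ^ q := by
  have hq0 : (0:ℝ) ≤ q := by linarith
  rw [← enorm_eq_nnnorm, ← ofReal_norm, ← enorm_eq_nnnorm, ← ofReal_norm,
    ENNReal.ofReal_rpow_of_nonneg (norm_nonneg _) hq0,
    ← ENNReal.ofReal_mul (by positivity)]
  refine ENNReal.ofReal_le_ofReal ?_
  calc A ^ q * ‖w‖ = (A * ‖w‖ ^ (1/q)) ^ q := (key_pow hq hA (norm_nonneg _)).symm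
  _ ≤ ‖v‖ ^ q := Real.rpow_le_rpow (by positivity) h hq0

lemma integrand_le {q : ℝ} (hq : 1 ≤ q) {A₂ : ℝ} (hA₂ : 0 < A₂) (u : Euc N → Euc d)
    (hupp : ∀ x y : Euc N, ‖u x - u y‖ ≤ A₂ * ‖x - y‖ ^ (1 / q)) (ε : ℝ)
    (x y : Euc N) :
    (‖u x - u y‖₊ : ℝ≥0∞) ^ q / (ENNReal.ofReal (ε ^ N) * (‖x - y‖₊ : ℝ≥0∞)) ≤
      ENNReal.ofReal (A₂ ^ q) / ENNReal.ofReal (ε ^ N) := by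
  rcases eq_or_ne x y with rfl | hxy
  · simp [ENNReal.zero_rpow_of_pos (lt_of_lt_of_le one_pos hq), ENNReal.zero_div]
  · have hb : (‖x - y‖₊ : ℝ≥0∞) ≠ 0 := by
      simp [sub_eq_zero, hxy]
    calc (‖u x - u y‖₊ : ℝ≥0∞) ^ q / (ENNReal.ofReal (ε ^ N) * (‖x - y‖₊ : ℝ≥0∞))
        ≤ (ENNReal.ofReal (A₂ ^ q) * (‖x - y‖₊ : ℝ≥0∞)) /
          (ENNReal.ofReal (ε ^ N) * (‖x - y‖₊ : ℝ≥0∞)) :=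
        ENNReal.div_le_div_right (besov_nnnorm_pow_le hq hA₂.le (hupp x y)) _
    _ = ENNReal.ofReal (A₂ ^ q) / ENNReal.ofReal (ε ^ N) :=
        ENNReal.mul_div_mul_right _ _ hb ENNReal.coe_ne_top

lemma integrand_ge {q : ℝ} (hq : 1 ≤ q) {A₁ : ℝ} (hA₁ : 0 < A₁) (u : Euc N → Euc d)
    (hlow : ∀ x y : Euc N, A₁ * ‖x - y‖ ^ (1 / q) ≤ ‖u x - u y‖) (ε : ℝ)
    {x y : Euc N} (hxy : x ≠ y) :
    ENNReal.ofReal (A₁ ^ q) / ENNReal.ofReal (ε ^ N) ≤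
      (‖u x - u y‖₊ : ℝ≥0∞) ^ q / (ENNReal.ofReal (ε ^ N) * (‖x - y‖₊ : ℝ≥0∞)) := by
  have hb : (‖x - y‖₊ : ℝ≥0∞) ≠ 0 := by
    simp [sub_eq_zero, hxy]
  calc ENNReal.ofReal (A₁ ^ q) / ENNReal.ofReal (ε ^ N)
      = (ENNReal.ofReal (A₁ ^ q) * (‖x - y‖₊ : ℝ≥0∞)) /
        (ENNReal.ofReal (ε ^ N) * (‖x - y‖₊ : ℝ≥0∞)) :=
      (ENNReal.mul_div_mul_right _ _ hb ENNReal.coe_ne_top).symm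
  _ ≤ (‖u x - u y‖₊ : ℝ≥0∞) ^ q / (ENNReal.ofReal (ε ^ N) * (‖x - y‖₊ : ℝ≥0∞)) :=
      ENNReal.div_le_div_right (besov_nnnorm_pow_ge hq hA₁.le (hlow x y)) _

lemma besov_le [Nontrivial (Euc N)] {q : ℝ} (hq : 1 ≤ q) {A₂ : ℝ} (hA₂ : 0 < A₂)
    (u : Euc N → Euc d) (hupp : ∀ x y : Euc N, ‖u x - u y‖ ≤ A₂ * ‖x - y‖ ^ (1 / q))
    (Ω : Set (Euc N)) {ε : ℝ} (hε : 0 < ε) :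
    besovInt N d Ω u q ε ≤
      volume (ball (0 : Euc N) 1) * ENNReal.ofReal (A₂ ^ q) * volume Ω := by
  have hεN : ENNReal.ofReal (ε ^ N) ≠ 0 := (ENNReal.ofReal_pos.mpr (pow_pos hε N)).ne'
  have hinner : ∀ x : Euc N,
      (∫⁻ y in Ω ∩ ball x ε,
        (‖u x - u y‖₊ : ℝ≥0∞) ^ q / (ENNReal.ofReal (ε ^ N) * (‖x - y‖₊ : ℝ≥0∞))) ≤
      ENNReal.ofReal (A₂ ^ q) * volume (ball (0 : Euc N) 1) := by
    intro x
    calc (∫⁻ y in Ω ∩ ball x ε,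
          (‖u x - u y‖₊ : ℝ≥0∞) ^ q / (ENNReal.ofReal (ε ^ N) * (‖x - y‖₊ : ℝ≥0∞)))
        ≤ ∫⁻ _ in Ω ∩ ball x ε, ENNReal.ofReal (A₂ ^ q) / ENNReal.ofReal (ε ^ N) :=
        lintegral_mono fun y => integrand_le hq hA₂ u hupp ε x y
    _ = ENNReal.ofReal (A₂ ^ q) / ENNReal.ofReal (ε ^ N) * volume (Ω ∩ ball x ε) :=
        setLIntegral_const _ _
    _ ≤ ENNReal.ofReal (A₂ ^ q) / ENNReal.ofReal (ε ^ N) * volume (ball x ε) :=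
        mul_le_mul_right (measure_mono inter_subset_right) _
    _ = ENNReal.ofReal (A₂ ^ q) * volume (ball (0 : Euc N) 1) := by
        rw [Measure.addHaar_ball volume x hε.le, finrank_euclideanSpace_fin,
          ← mul_assoc, ENNReal.div_mul_cancel hεN ENNReal.ofReal_ne_top]
  calc besovInt N d Ω u q ε
      ≤ ∫⁻ _ in Ω, ENNReal.ofReal (A₂ ^ q) * volume (ball (0 : Euc N) 1) :=
      lintegral_mono hinner
  _ = ENNReal.ofReal (A₂ ^ q) * volume (ball (0 : Euc N) 1) * volume Ω :=
      setLIntegral_const _ _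
  _ = volume (ball (0 : Euc N) 1) * ENNReal.ofReal (A₂ ^ q) * volume Ω := by ring

lemma besov_ge [Nontrivial (Euc N)] {q : ℝ} (hq : 1 ≤ q) {A₁ : ℝ} (hA₁ : 0 < A₁)
    (u : Euc N → Euc d) (hlow : ∀ x y : Euc N, A₁ * ‖x - y‖ ^ (1 / q) ≤ ‖u x - u y‖)
    {Ω K : Set (Euc N)} {ε : ℝ} (hKm : MeasurableSet K) (hKΩ : K ⊆ Ω)
    (hKb : ∀ x ∈ K, ball x ε ⊆ Ω) (hε : 0 < ε) :
    volume (ball (0 : Euc N) 1) * ENNReal.ofReal (A₁ ^ q) * volume K ≤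
      besovInt N d Ω u q ε := by
  have hεN : ENNReal.ofReal (ε ^ N) ≠ 0 := (ENNReal.ofReal_pos.mpr (pow_pos hε N)).ne'
  have hinner : ∀ x ∈ K,
      ENNReal.ofReal (A₁ ^ q) * volume (ball (0 : Euc N) 1) ≤
      ∫⁻ y in Ω ∩ ball x ε,
        (‖u x - u y‖₊ : ℝ≥0∞) ^ q / (ENNReal.ofReal (ε ^ N) * (‖x - y‖₊ : ℝ≥0∞)) := by
    intro x hx
    have hsub : Ω ∩ ball x ε = ball x ε := inter_eq_self_of_subset_right (hKb x hx)
    rw [hsub]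
    have hane : ∀ᵐ y : Euc N ∂volume, y ≠ x := by
      rw [ae_iff]
      have hset : {a : Euc N | ¬ a ≠ x} = {x} := by ext a; simp
      rw [hset]
      exact measure_singleton x
    have h1 : (∫⁻ _ in ball x ε, ENNReal.ofReal (A₁ ^ q) / ENNReal.ofReal (ε ^ N)) ≤
        ∫⁻ y in ball x ε,
          (‖u x - u y‖₊ : ℝ≥0∞) ^ q / (ENNReal.ofReal (ε ^ N) * (‖x - y‖₊ : ℝ≥0∞)) := by
      refine lintegral_mono_ae (ae_restrict_of_ae ?_)
      filter_upwards [hane] with y hy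
      exact integrand_ge hq hA₁ u hlow ε (fun h => hy h.symm)
    calc ENNReal.ofReal (A₁ ^ q) * volume (ball (0 : Euc N) 1)
        = ENNReal.ofReal (A₁ ^ q) / ENNReal.ofReal (ε ^ N) * volume (ball x ε) := by
          rw [Measure.addHaar_ball volume x hε.le, finrank_euclideanSpace_fin,
            ← mul_assoc, ENNReal.div_mul_cancel hεN ENNReal.ofReal_ne_top]
    _ = ∫⁻ _ in ball x ε, ENNReal.ofReal (A₁ ^ q) / ENNReal.ofReal (ε ^ N) :=
        (setLIntegral_const _ _).symm
    _ ≤ _ := h1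
  calc volume (ball (0 : Euc N) 1) * ENNReal.ofReal (A₁ ^ q) * volume K
      = ENNReal.ofReal (A₁ ^ q) * volume (ball (0 : Euc N) 1) * volume K := by ring
  _ = ∫⁻ _ in K, ENNReal.ofReal (A₁ ^ q) * volume (ball (0 : Euc N) 1) :=
      (setLIntegral_const _ _).symm
  _ ≤ ∫⁻ x in K, ∫⁻ y in Ω ∩ ball x ε,
        (‖u x - u y‖₊ : ℝ≥0∞) ^ q / (ENNReal.ofReal (ε ^ N) * (‖x - y‖₊ : ℝ≥0∞)) :=
      lintegral_mono_ae ((ae_restrict_iff' hKm).mpr (ae_of_all _ hinner))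
  _ ≤ besovInt N d Ω u q ε :=
      lintegral_mono' (Measure.restrict_mono hKΩ le_rfl) le_rfl

end AuxLemmas

/-- Let `1 ≤ q < ∞` and let `u : ℝ^N → ℝ^d` satisfy
`A₁|x−y|^{1/q} ≤ |u(x)−u(y)| ≤ A₂|x−y|^{1/q}` for all `x, y` and some `0 < A₁, A₂ < ∞`.
Then for every open, bounded, nonempty `Ω ⊆ ℝ^N` one has
`0 < α(N)A₁^q L^N(Ω) ≤ B̲_{u,q}(Ω) ≤ B̄_{u,q}(Ω) ≤ α(N)A₂^q L^N(Ω) < ∞`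
(where `α(N) = L^N(B_1(0))`); in particular `u ∈ BV^q(Ω, ℝ^d)`, `J'_u = ∅`, and the
`q`-jump inequality `C_N ∫_{J'_u} |u^{j'}|^q dH^{N−1} ≤ B̲_{u,q}(Ω)` is strict. -/
theorem strict_jump_inequality_example
    {N d : ℕ} (hN : 0 < N) {q : ℝ} (hq : 1 ≤ q)
    (u : Euc N → Euc d) (A₁ A₂ : ℝ) (hA₁ : 0 < A₁) (hA₂ : 0 < A₂)
    (hlow : ∀ x y : Euc N, A₁ * ‖x - y‖ ^ (1 / q) ≤ ‖u x - u y‖)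
    (hupp : ∀ x y : Euc N, ‖u x - u y‖ ≤ A₂ * ‖x - y‖ ^ (1 / q))
    {Ω : Set (Euc N)} (hΩ : IsOpen Ω) (hbd : Bornology.IsBounded Ω) (hne : Ω.Nonempty) :
    (0 < volume (ball (0 : Euc N) 1) * ENNReal.ofReal (A₁ ^ q) * volume Ω) ∧
    (volume (ball (0 : Euc N) 1) * ENNReal.ofReal (A₁ ^ q) * volume Ω ≤
      liminf (fun ε => besovInt N d Ω u q ε) (𝓝[>] (0:ℝ))) ∧
    (liminf (fun ε => besovInt N d Ω u q ε) (𝓝[>] (0:ℝ)) ≤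
      limsup (fun ε => besovInt N d Ω u q ε) (𝓝[>] (0:ℝ))) ∧
    (limsup (fun ε => besovInt N d Ω u q ε) (𝓝[>] (0:ℝ)) ≤
      volume (ball (0 : Euc N) 1) * ENNReal.ofReal (A₂ ^ q) * volume Ω) ∧
    (volume (ball (0 : Euc N) 1) * ENNReal.ofReal (A₂ ^ q) * volume Ω < ⊤) ∧
    (MemLp u (ENNReal.ofReal q) (volume.restrict Ω) ∧
      (⨆ ε ∈ Ioo (0:ℝ) 1, besovInt N d Ω u q ε) < ⊤) ∧
    genJumpSet Ω u = ∅ ∧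
    ∀ jmp : Euc N → Euc d,
      ((N : ℝ≥0∞)⁻¹ *
          ∫⁻ z in sphere (0 : Euc N) 1, (‖z ⟨0, hN⟩‖₊ : ℝ≥0∞) ∂(μH[(N : ℝ) - 1])) *
          (∫⁻ x in genJumpSet Ω u, (‖jmp x‖₊ : ℝ≥0∞) ^ q ∂(μH[(N : ℝ) - 1]))
        < liminf (fun ε => besovInt N d Ω u q ε) (𝓝[>] (0:ℝ)) := by
  haveI : Nontrivial (Euc N) := by
    refine ⟨EuclideanSpace.single ⟨0, hN⟩ (1:ℝ), 0, fun h => ?_⟩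
    have h0 : (EuclideanSpace.single ⟨0, hN⟩ (1:ℝ) : Euc N) ⟨0, hN⟩ = (0 : Euc N) ⟨0, hN⟩ := by rw [h]
    rw [EuclideanSpace.single_apply] at h0
    simp at h0
  have hq0 : (0:ℝ) < q := lt_of_lt_of_le one_pos hq
  have hα0 : volume (ball (0 : Euc N) 1) ≠ 0 :=
    (isOpen_ball.measure_pos volume (nonempty_ball.mpr one_pos)).ne'
  have hαt : volume (ball (0 : Euc N) 1) ≠ ⊤ := measure_ball_lt_top.ne
  have hΩ0 : volume Ω ≠ 0 := (hΩ.measure_pos volume hne).ne'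
  have hΩt : volume Ω < ⊤ := hbd.measure_lt_top
  have hA1q : (0:ℝ) < A₁ ^ q := Real.rpow_pos_of_pos hA₁ q
  have hA2q : (0:ℝ) < A₂ ^ q := Real.rpow_pos_of_pos hA₂ q
  -- (1) positivity
  have c1 : 0 < volume (ball (0 : Euc N) 1) * ENNReal.ofReal (A₁ ^ q) * volume Ω :=
    ENNReal.mul_pos (mul_ne_zero hα0 (ENNReal.ofReal_pos.mpr hA1q).ne') hΩ0
  -- (2) liminf lower bound
  have c2 : volume (ball (0 : Euc N) 1) * ENNReal.ofReal (A₁ ^ q) * volume Ω ≤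
      liminf (fun ε => besovInt N d Ω u q ε) (𝓝[>] (0:ℝ)) := by
    set C := volume (ball (0 : Euc N) 1) * ENNReal.ofReal (A₁ ^ q) with hCdef
    have hC0 : C ≠ 0 := mul_ne_zero hα0 (ENNReal.ofReal_pos.mpr hA1q).ne'
    have hCt : C ≠ ⊤ := ENNReal.mul_ne_top hαt ENNReal.ofReal_ne_top
    refine ENNReal.le_of_forall_pos_le_add fun η hη _ => ?_
    have hηC : (η : ℝ≥0∞) / C ≠ 0 :=
      (ENNReal.div_pos (ENNReal.coe_ne_zero.mpr hη.ne') hCt).ne'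
    obtain ⟨K, hKΩ, hKc, hKlt⟩ :=
      hΩ.measurableSet.exists_isCompact_lt_add hΩt.ne hηC
    obtain ⟨δ, hδ0, hδ⟩ := hKc.exists_thickening_subset_open hΩ hKΩ
    have hev : ∀ᶠ ε in 𝓝[>] (0:ℝ), C * volume K ≤ besovInt N d Ω u q ε := by
      filter_upwards [Ioo_mem_nhdsGT_of_mem (⟨le_refl 0, hδ0⟩ : (0:ℝ) ∈ Ico 0 δ)]
        with ε hε
      have hball : ∀ x ∈ K, ball x ε ⊆ Ω := fun x hx =>
        (ball_subset_ball hε.2.le).trans ((ball_subset_thickening hx δ).trans hδ)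
      exact besov_ge hq hA₁ u hlow hKc.measurableSet hKΩ hball hε.1
    have hlim : C * volume K ≤ liminf (fun ε => besovInt N d Ω u q ε) (𝓝[>] (0:ℝ)) :=
      le_liminf_of_le (by isBoundedDefault) hev
    calc C * volume Ω ≤ C * (volume K + (η : ℝ≥0∞) / C) := mul_le_mul_right hKlt.le _
    _ = C * volume K + C * ((η : ℝ≥0∞) / C) := mul_add _ _ _
    _ = C * volume K + (η : ℝ≥0∞) := by
        rw [mul_comm C ((η : ℝ≥0∞) / C), ENNReal.div_mul_cancel hC0 hCt]
    _ ≤ liminf (fun ε => besovInt N d Ω u q ε) (𝓝[>] (0:ℝ)) + (η : ℝ≥0∞) :=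
        add_le_add_left hlim _
  -- (3) liminf ≤ limsup
  have c3 : liminf (fun ε => besovInt N d Ω u q ε) (𝓝[>] (0:ℝ)) ≤
      limsup (fun ε => besovInt N d Ω u q ε) (𝓝[>] (0:ℝ)) := liminf_le_limsup
  -- (4) limsup upper bound
  have c4 : limsup (fun ε => besovInt N d Ω u q ε) (𝓝[>] (0:ℝ)) ≤
      volume (ball (0 : Euc N) 1) * ENNReal.ofReal (A₂ ^ q) * volume Ω := by
    refine limsup_le_of_le (by isBoundedDefault) ?_
    filter_upwards [self_mem_nhdsWithin] with ε (hε : ε ∈ Ioi (0:ℝ))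
    exact besov_le hq hA₂ u hupp Ω hε
  -- (5) finiteness
  have c5 : volume (ball (0 : Euc N) 1) * ENNReal.ofReal (A₂ ^ q) * volume Ω < ⊤ :=
    ENNReal.mul_lt_top (ENNReal.mul_lt_top hαt.lt_top ENNReal.ofReal_lt_top) hΩt
  -- (6) MemLp and finite Besov constant
  have hu_cont : Continuous u := by
    refine continuous_iff_continuousAt.mpr fun x => ?_
    rw [ContinuousAt, tendsto_iff_dist_tendsto_zero]
    have htb : Tendsto (fun y : Euc N => A₂ * ‖y - x‖ ^ (1/q)) (𝓝 x) (𝓝 0) := by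
      have hcont : Continuous fun y : Euc N => A₂ * ‖y - x‖ ^ (1/q) :=
        continuous_const.mul
          (((continuous_id.sub continuous_const).norm).rpow_const fun y =>
            Or.inr (by positivity))
      exact hcont.tendsto' x 0 (by
        simp [Real.zero_rpow (show (q:ℝ)⁻¹ ≠ 0 by positivity), one_div])
    refine squeeze_zero (fun y => dist_nonneg) (fun y => ?_) htb
    rw [dist_eq_norm]
    exact hupp y x
  haveI : IsFiniteMeasure (volume.restrict Ω) :=
    ⟨by rwa [Measure.restrict_apply_univ]⟩
  obtain ⟨x₀, hx₀⟩ := hne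
  obtain ⟨R, hR⟩ := (isBounded_iff_subset_closedBall x₀).mp hbd
  have hR0 : 0 ≤ R := by
    have h0 := hR hx₀
    simpa [mem_closedBall, dist_self] using h0
  have hmem : MemLp u (ENNReal.ofReal q) (volume.restrict Ω) := by
    refine MemLp.of_bound hu_cont.aestronglyMeasurable (‖u x₀‖ + A₂ * R ^ (1/q)) ?_
    refine (ae_restrict_iff' hΩ.measurableSet).mpr (ae_of_all _ fun x hx => ?_)
    have hd : ‖x - x₀‖ ≤ R := by
      have h0 := hR hx
      rwa [mem_closedBall, dist_eq_norm] at h0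
    calc ‖u x‖ = ‖(u x - u x₀) + u x₀‖ := by rw [sub_add_cancel]
    _ ≤ ‖u x - u x₀‖ + ‖u x₀‖ := norm_add_le _ _
    _ ≤ A₂ * ‖x - x₀‖ ^ (1/q) + ‖u x₀‖ := add_le_add_left (hupp x x₀) _
    _ ≤ A₂ * R ^ (1/q) + ‖u x₀‖ := by
        refine add_le_add_left
          (mul_le_mul_of_nonneg_left
            (Real.rpow_le_rpow (norm_nonneg _) hd (by positivity)) hA₂.le) _
    _ = ‖u x₀‖ + A₂ * R ^ (1/q) := by ring
  have csup : (⨆ ε ∈ Ioo (0:ℝ) 1, besovInt N d Ω u q ε) < ⊤ :=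
    lt_of_le_of_lt (iSup₂_le fun ε hε => besov_le hq hA₂ u hupp Ω hε.1) c5
  -- (7) empty jump set
  have hJ : genJumpSet Ω u = ∅ := by
    rw [Set.eq_empty_iff_forall_notMem]
    rintro x ⟨hxΩ, h, ν, hν, hh, htend⟩
    have hh0 : (0:ℝ) < ‖h‖ := norm_pos_iff.mpr hh
    have htendδ : Tendsto (fun ρ : ℝ => A₂ * ρ ^ (1/q)) (𝓝[>] (0:ℝ)) (𝓝 0) := by
      refine tendsto_nhdsWithin_of_tendsto_nhds ?_
      have hcont : Continuous fun ρ : ℝ => A₂ * ρ ^ (1/q) :=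
        continuous_const.mul (Real.continuous_rpow_const (by positivity))
      exact hcont.tendsto' 0 0 (by
        simp [Real.zero_rpow (show (q:ℝ)⁻¹ ≠ 0 by positivity), one_div])
    have hev1 : ∀ᶠ ρ in 𝓝[>] (0:ℝ), A₂ * ρ ^ (1/q) < ‖h‖/8 :=
      htendδ.eventually_lt_const (by positivity)
    have hev2 := (ENNReal.tendsto_nhds_zero.mp htend) (ENNReal.ofReal (‖h‖/4))
      (ENNReal.ofReal_pos.mpr (by positivity))
    obtain ⟨ρ, hδsmall, hFsmall, (hρ : ρ ∈ Ioi (0:ℝ))⟩ :=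
      (hev1.and (hev2.and self_mem_nhdsWithin)).exists
    set δ := A₂ * ρ ^ (1/q) with hδdef
    have hρ0 : (0:ℝ) < ρ := hρ
    have hδnn : 0 ≤ δ := by positivity
    have hdist : ∀ y : Euc N, y ∈ ball x ρ → ‖u x - u y‖ ≤ δ := by
      intro y hy
      refine (hupp x y).trans ?_
      have hxy : ‖x - y‖ ≤ ρ := by
        rw [← dist_eq_norm, dist_comm]
        exact (mem_ball.mp hy).le
      exact mul_le_mul_of_nonneg_left
        (Real.rpow_le_rpow (norm_nonneg _) hxy (by positivity)) hA₂.le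
    have key : ENNReal.ofReal (‖h‖ - 2*δ) ≤ ⨅ c : Euc d,
        ((eavg (halfBallP x ν ρ) fun y => (‖u y - h - c‖₊ : ℝ≥0∞)) +
          eavg (halfBallM x ν ρ) fun y => (‖u y - c‖₊ : ℝ≥0∞)) := by
      refine le_iInf fun c => ?_
      have e1 : ENNReal.ofReal (‖u x - h - c‖ - δ) ≤
          eavg (halfBallP x ν ρ) fun y => (‖u y - h - c‖₊ : ℝ≥0∞) := by
        refine le_eavg (isOpen_halfBallP x ν ρ).measurableSet
          (volume_halfBallP_ne_zero hν hρ0) (volume_halfBallP_ne_top x ν ρ)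
          fun y hy => ?_
        rw [← enorm_eq_nnnorm, ← ofReal_norm]
        refine ENNReal.ofReal_le_ofReal ?_
        have h1 : ‖u x - u y‖ ≤ δ := hdist y hy.1
        have h2 : ‖u x - h - c‖ - ‖u x - u y‖ ≤ ‖u y - h - c‖ := by
          have h3 := norm_sub_norm_le (u x - h - c) (u x - u y)
          have heq : (u x - h - c) - (u x - u y) = u y - h - c := by abel
          rwa [heq] at h3
        linarith
      have e2 : ENNReal.ofReal (‖u x - c‖ - δ) ≤
          eavg (halfBallM x ν ρ) fun y => (‖u y - c‖₊ : ℝ≥0∞) := by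
        refine le_eavg (isOpen_halfBallM x ν ρ).measurableSet
          (volume_halfBallM_ne_zero hν hρ0) (volume_halfBallM_ne_top x ν ρ)
          fun y hy => ?_
        rw [← enorm_eq_nnnorm, ← ofReal_norm]
        refine ENNReal.ofReal_le_ofReal ?_
        have h1 : ‖u x - u y‖ ≤ δ := hdist y hy.1
        have h2 : ‖u x - c‖ - ‖u x - u y‖ ≤ ‖u y - c‖ := by
          have h3 := norm_sub_norm_le (u x - c) (u x - u y)
          have heq : (u x - c) - (u x - u y) = u y - c := by abel
          rwa [heq] at h3
        linarith
      calc ENNReal.ofReal (‖h‖ - 2*δ)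
          ≤ ENNReal.ofReal ((‖u x - h - c‖ - δ) + (‖u x - c‖ - δ)) := by
            refine ENNReal.ofReal_le_ofReal ?_
            have heq : (u x - c) - (u x - h - c) = h := by abel
            have h4 : ‖h‖ ≤ ‖u x - c‖ + ‖u x - h - c‖ := by
              calc ‖h‖ = ‖(u x - c) - (u x - h - c)‖ := by rw [heq]
              _ ≤ ‖u x - c‖ + ‖u x - h - c‖ := norm_sub_le _ _
            linarith
      _ ≤ ENNReal.ofReal (‖u x - h - c‖ - δ) + ENNReal.ofReal (‖u x - c‖ - δ) :=
          ENNReal.ofReal_add_le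
      _ ≤ _ := add_le_add e1 e2
    have hle : ENNReal.ofReal (‖h‖ - 2*δ) ≤ ENNReal.ofReal (‖h‖/4) :=
      key.trans hFsmall
    rw [ENNReal.ofReal_le_ofReal_iff (by positivity)] at hle
    linarith [hδsmall]
  refine ⟨c1, c2, c3, c4, c5, ⟨hmem, csup⟩, hJ, ?_⟩
  intro jmp
  rw [hJ]
  simpa [Measure.restrict_empty] using lt_of_lt_of_le c1 c2
end
end

section
/- Let Ω ⊂ ℝ^N be an open set, let q ∈ [1,∞) and r ∈ (0,1), and let u ∈ W^{r,q}_loc(Ω,ℝ^d). Then for every open set Ω_0 compactly contained in Ω one has ∫_{Ω_0} sup_{δ∈(0,∞)} ( ∫_{B_1(0)} χ_{Ω_0}(x+δz) · |u(x+δz) − u(x)|^q / δ^{rq} dz ) dx < ∞. -/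
open MeasureTheory Metric Filter Set Topology
open scoped ENNReal NNReal

noncomputable section

/-- `u ∈ W^{r,q}(Ω, ℝ^d)`: `u ∈ L^q(Ω)` and the Gagliardo seminorm is finite. -/
def MemFracSobolev (N d : ℕ) (Ω : Set (Euc N)) (u : Euc N → Euc d) (r q : ℝ) : Prop :=
  MemLp u (ENNReal.ofReal q) (volume.restrict Ω) ∧
    (∫⁻ x in Ω, ∫⁻ y in Ω,
        (‖u x - u y‖₊ : ℝ≥0∞) ^ q / (‖x - y‖₊ : ℝ≥0∞) ^ ((N : ℝ) + r * q)) < ⊤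

/-- Change of variables for a dilation in Euclidean space. -/
lemma lintegral_comp_smul_euc {N : ℕ} (f : Euc N → ℝ≥0∞) {δ : ℝ} (hδ : 0 < δ) :
    ∫⁻ z, f (δ • z) = ENNReal.ofReal ((δ ^ N)⁻¹) * ∫⁻ w, f w := by
  have hδ' : δ ≠ 0 := hδ.ne'
  have h1 : ∫⁻ z, f (δ • z) = ∫⁻ w, f w ∂(Measure.map (δ • ·) (volume : Measure (Euc N))) :=
    (lintegral_map_equiv f (MeasurableEquiv.smul₀ δ hδ')).symm
  rw [h1, MeasureTheory.Measure.map_addHaar_smul (volume : Measure (Euc N)) hδ',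
    lintegral_smul_measure, finrank_euclideanSpace_fin, abs_of_pos (by positivity), smul_eq_mul]

/-- Let `Ω ⊆ ℝ^N` be open, `q ∈ [1,∞)`, `r ∈ (0,1)` and
`u ∈ W^{r,q}_loc(Ω, ℝ^d)`. Then for every open `Ω₀` compactly contained in `Ω`,
`∫_{Ω₀} sup_{δ∈(0,∞)} ∫_{B_1(0)} χ_{Ω₀}(x+δz) |u(x+δz)−u(x)|^q/δ^{rq} dz dx < ∞`. -/
theorem frac_sobolev_sup_bound
    {N d : ℕ} {Ω : Set (Euc N)} (hΩ : IsOpen Ω)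
    {q r : ℝ} (hq : 1 ≤ q) (hr0 : 0 < r) (hr1 : r < 1)
    (u : Euc N → Euc d)
    (hu : ∀ Ω₀ : Set (Euc N), IsOpen Ω₀ → IsCompact (closure Ω₀) → closure Ω₀ ⊆ Ω →
      MemFracSobolev N d Ω₀ u r q) :
    ∀ Ω₀ : Set (Euc N), IsOpen Ω₀ → IsCompact (closure Ω₀) → closure Ω₀ ⊆ Ω →
      (∫⁻ x in Ω₀, ⨆ (δ : ℝ) (_ : 0 < δ),
          ∫⁻ z in ball (0 : Euc N) 1,
            Ω₀.indicator (fun _ => (1 : ℝ≥0∞)) (x + δ • z) *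
              (‖u (x + δ • z) - u x‖₊ : ℝ≥0∞) ^ q / ENNReal.ofReal (δ ^ (r * q))) < ⊤ := by
  intro Ω₀ hΩ₀ hc hsub
  obtain ⟨-, hGag⟩ := hu Ω₀ hΩ₀ hc hsub
  have hq0 : (0 : ℝ) < q := lt_of_lt_of_le one_pos hq
  have hexp : (0 : ℝ) ≤ (N : ℝ) + r * q := by positivity
  have key : ∀ x : Euc N,
      (⨆ (δ : ℝ) (_ : 0 < δ),
        ∫⁻ z in ball (0 : Euc N) 1,
          Ω₀.indicator (fun _ => (1 : ℝ≥0∞)) (x + δ • z) *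
            (‖u (x + δ • z) - u x‖₊ : ℝ≥0∞) ^ q / ENNReal.ofReal (δ ^ (r * q)))
      ≤ ∫⁻ y in Ω₀, (‖u x - u y‖₊ : ℝ≥0∞) ^ q / (‖x - y‖₊ : ℝ≥0∞) ^ ((N : ℝ) + r * q) := by
    intro x
    refine iSup₂_le fun δ hδ => ?_
    set G : Euc N → ℝ≥0∞ :=
      fun y => (‖u x - u y‖₊ : ℝ≥0∞) ^ q / (‖x - y‖₊ : ℝ≥0∞) ^ ((N : ℝ) + r * q) with hG
    set g : Euc N → ℝ≥0∞ := fun y =>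
      Ω₀.indicator (fun _ => (1 : ℝ≥0∞)) y * (‖u y - u x‖₊ : ℝ≥0∞) ^ q /
        ENNReal.ofReal (δ ^ (r * q)) with hg
    set h : Euc N → ℝ≥0∞ := (ball x δ).indicator g with hh
    set c : ℝ≥0∞ := ENNReal.ofReal ((δ ^ N)⁻¹) with hcdef
    have hc_ne_top : c ≠ ⊤ := ENNReal.ofReal_ne_top
    -- the integrand over `ball 0 1` is `h ∘ (x + δ • ·)`
    have hof : ∀ z : Euc N, (ball (0 : Euc N) 1).indicator (fun z => g (x + δ • z)) z
        = h (x + δ • z) := by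
      intro z
      have hmem : x + δ • z ∈ ball x δ ↔ z ∈ ball (0 : Euc N) 1 := by
        simp only [mem_ball_iff_norm, add_sub_cancel_left, norm_smul, Real.norm_eq_abs,
          abs_of_pos hδ, sub_zero]
        constructor
        · intro hlt
          nlinarith [norm_nonneg z]
        · intro hlt
          nlinarith [norm_nonneg z]
      by_cases hz : z ∈ ball (0 : Euc N) 1
      · rw [Set.indicator_of_mem hz, hh, Set.indicator_of_mem (hmem.2 hz)]
      · rw [Set.indicator_of_notMem hz, hh,
          Set.indicator_of_notMem (fun hmem' => hz (hmem.1 hmem'))]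
    -- pointwise bound
    have hpt : ∀ y : Euc N, c * h y ≤ Ω₀.indicator G y := by
      intro y
      by_cases hb : y ∈ ball x δ
      · rw [hh, Set.indicator_of_mem hb]
        by_cases hy : y ∈ Ω₀
        · rw [Set.indicator_of_mem hy, hg, hG]
          simp only [Set.indicator_of_mem hy, one_mul]
          set A : ℝ≥0∞ := (‖u y - u x‖₊ : ℝ≥0∞) ^ q with hA
          have hGA : (‖u x - u y‖₊ : ℝ≥0∞) ^ q = A := by
            rw [hA, ← neg_sub (u y) (u x), nnnorm_neg]
          have hxy : (‖x - y‖₊ : ℝ≥0∞) = (‖y - x‖₊ : ℝ≥0∞) := by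
            rw [← neg_sub y x, nnnorm_neg]
          rw [hGA, hxy]
          set B : ℝ≥0∞ := (‖y - x‖₊ : ℝ≥0∞) ^ ((N : ℝ) + r * q) with hB
          set D : ℝ≥0∞ := ENNReal.ofReal (δ ^ (r * q)) with hD
          set P : ℝ≥0∞ := ENNReal.ofReal (δ ^ N) with hP
          have hcP : c = P⁻¹ := by
            rw [hcdef, hP, ENNReal.ofReal_inv_of_pos (by positivity)]
          have hD0 : D ≠ 0 := by
            rw [hD]
            simp only [ne_eq, ENNReal.ofReal_eq_zero, not_le]
            positivity
          have hDt : D ≠ ⊤ := ENNReal.ofReal_ne_top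
          have hP0 : P ≠ 0 := by
            rw [hP]
            simp only [ne_eq, ENNReal.ofReal_eq_zero, not_le]
            positivity
          -- B ≤ D * P
          have hBle : B ≤ D * P := by
            have hDP : D * P = ENNReal.ofReal δ ^ ((N : ℝ) + r * q) := by
              rw [hD, hP, ← ENNReal.ofReal_mul (by positivity), ← Real.rpow_natCast δ N,
                ← Real.rpow_add hδ, add_comm, ENNReal.ofReal_rpow_of_pos hδ]
            rw [hDP, hB]
            refine ENNReal.rpow_le_rpow ?_ hexp
            rw [← ENNReal.ofReal_coe_nnreal, coe_nnnorm]
            exact ENNReal.ofReal_le_ofReal (mem_ball_iff_norm.1 hb).le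
          calc c * (A / D) = A * (D⁻¹ * P⁻¹) := by
                rw [hcP, div_eq_mul_inv]; ring
            _ = A * (D * P)⁻¹ := by rw [ENNReal.mul_inv (Or.inl hD0) (Or.inl hDt)]
            _ ≤ A * B⁻¹ := by
                refine mul_le_mul_right (ENNReal.inv_le_inv.2 hBle) A
            _ = A / B := (div_eq_mul_inv A B).symm
        · rw [Set.indicator_of_notMem hy, hg]
          simp [Set.indicator_of_notMem hy]
      · rw [hh, Set.indicator_of_notMem hb]
        simp
    calc ∫⁻ z in ball (0 : Euc N) 1,
          Ω₀.indicator (fun _ => (1 : ℝ≥0∞)) (x + δ • z) *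
            (‖u (x + δ • z) - u x‖₊ : ℝ≥0∞) ^ q / ENNReal.ofReal (δ ^ (r * q))
        = ∫⁻ z, (ball (0 : Euc N) 1).indicator (fun z => g (x + δ • z)) z :=
          (lintegral_indicator measurableSet_ball _).symm
      _ = ∫⁻ z, h (x + δ • z) := by
          exact lintegral_congr hof
      _ = ∫⁻ z, (fun w => h (x + w)) (δ • z) := rfl
      _ = c * ∫⁻ w, h (x + w) := by
          rw [hcdef]; exact lintegral_comp_smul_euc (fun w => h (x + w)) hδ
      _ = c * ∫⁻ y, h y := by rw [lintegral_add_left_eq_self (fun y => h y) x]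
      _ = ∫⁻ y, c * h y := (lintegral_const_mul' c h hc_ne_top).symm
      _ ≤ ∫⁻ y, Ω₀.indicator G y := lintegral_mono hpt
      _ = ∫⁻ y in Ω₀, G y := lintegral_indicator hΩ₀.measurableSet G
  calc (∫⁻ x in Ω₀, ⨆ (δ : ℝ) (_ : 0 < δ),
          ∫⁻ z in ball (0 : Euc N) 1,
            Ω₀.indicator (fun _ => (1 : ℝ≥0∞)) (x + δ • z) *
              (‖u (x + δ • z) - u x‖₊ : ℝ≥0∞) ^ q / ENNReal.ofReal (δ ^ (r * q)))
      ≤ ∫⁻ x in Ω₀, ∫⁻ y in Ω₀,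
          (‖u x - u y‖₊ : ℝ≥0∞) ^ q / (‖x - y‖₊ : ℝ≥0∞) ^ ((N : ℝ) + r * q) :=
        lintegral_mono fun x => key x
    _ < ⊤ := hGag
end
end
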